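/- For every m ≥ 1 and every g ∈ ℝ with g ≠ 0, the matrix T_m(g) is not diagonalizable: there exist no invertible matrix S ∈ GL_{m+1}(ℂ) and diagonal matrix Δ with T_m(g) = S·Δ·S⁻¹. -/
import Mathlib


/-- The `(m+1)×(m+1)` nilpotent matrix `D_m` with superdiagonal entries
`(D_m)_{h,h+1} = √((h+1)(m−h))`, `h = 0,…,m−1`. -/
noncomputable def Dmat (m : ℕ) : Matrix (Fin (m + 1)) (Fin (m + 1)) ℂ :=
  Matrix.of fun h k =>
    if (k : ℕ) = (h : ℕ) + 1 then ((Real.sqrt (((h : ℕ) + 1) * (m - (h : ℕ))) : ℝ) : ℂ) else 0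

/-- The matrix `T_m(g) = (m+1)·I + i g·D_m` of `H(g)` restricted to the invariant
subspace `ℋ_m`. -/
noncomputable def Tmat (m : ℕ) (g : ℝ) : Matrix (Fin (m + 1)) (Fin (m + 1)) ℂ :=
  ((m : ℂ) + 1) • (1 : Matrix (Fin (m + 1)) (Fin (m + 1)) ℂ) + (Complex.I * (g : ℂ)) • Dmat m

lemma Dmat_pow_apply (m k : ℕ) : ∀ h j : Fin (m + 1), (j : ℕ) ≠ (h : ℕ) + k →
    ((Dmat m) ^ k) h j = 0 := by
  induction k with
  | zero =>
    intro h j hj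
    rw [pow_zero]
    exact Matrix.one_apply_ne' (by
      intro hh; apply hj; rw [hh]; simp)
  | succ k ih =>
    intro h j hj
    rw [pow_succ, Matrix.mul_apply]
    apply Finset.sum_eq_zero
    intro l _
    by_cases hl : (l : ℕ) = (h : ℕ) + k
    · have hz : Dmat m l j = 0 := by
        simp only [Dmat, Matrix.of_apply]
        rw [if_neg]
        intro hjj; apply hj; omega
      rw [hz, mul_zero]
    · rw [ih h l hl, zero_mul]

lemma Dmat_pow_eq_zero (m : ℕ) : (Dmat m) ^ (m + 2) = 0 := by
  ext h j
  rw [Dmat_pow_apply m (m + 2) h j (by omega)]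
  rfl

lemma myConjPow {N : Type*} [Fintype N] [DecidableEq N]
    (S A : Matrix N N ℂ) (h1 : S⁻¹ * S = 1) (h2 : S * S⁻¹ = 1) (n : ℕ) :
    (S⁻¹ * A * S) ^ n = S⁻¹ * A ^ n * S := by
  induction n with
  | zero => simp [h1]
  | succ k ih =>
    rw [pow_succ, ih, pow_succ]
    calc S⁻¹ * A ^ k * S * (S⁻¹ * A * S)
        = S⁻¹ * A ^ k * (S * S⁻¹) * A * S := by noncomm_ring
      _ = S⁻¹ * (A ^ k * A) * S := by rw [h2]; noncomm_ring

/-- for `m ≥ 1` and `g ≠ 0`, the matrix `T_m(g)` is not diagonalizable: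
there are no invertible `S` and diagonal `Δ` with `T_m(g) = S·Δ·S⁻¹`. -/
theorem Tmat_not_diagonalizable (m : ℕ) (hm : 1 ≤ m) (g : ℝ) (hg : g ≠ 0) :
    ¬ ∃ (S Δ : Matrix (Fin (m + 1)) (Fin (m + 1)) ℂ),
        IsUnit S ∧ Δ.IsDiag ∧ Tmat m g = S * Δ * S⁻¹ := by
  rintro ⟨S, Δ, hS, hdiag, hT⟩
  have hdet : IsUnit S.det := (Matrix.isUnit_iff_isUnit_det S).mp hS
  have h1 : S⁻¹ * S = 1 := Matrix.nonsing_inv_mul S hdet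
  have h2 : S * S⁻¹ = 1 := Matrix.mul_nonsing_inv S hdet
  set c : ℂ := Complex.I * (g : ℂ) with hc
  have hc0 : c ≠ 0 := mul_ne_zero Complex.I_ne_zero (by exact_mod_cast hg)
  have hΔ : Δ = S⁻¹ * Tmat m g * S := by
    rw [hT]
    calc Δ = (S⁻¹ * S) * Δ * (S⁻¹ * S) := by rw [h1]; noncomm_ring
      _ = S⁻¹ * (S * Δ * S⁻¹) * S := by noncomm_ring
  set Δ' := Δ - ((m : ℂ) + 1) • (1 : Matrix (Fin (m + 1)) (Fin (m + 1)) ℂ) with hΔ'def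
  have hΔ' : Δ' = S⁻¹ * (c • Dmat m) * S := by
    rw [hΔ'def, hΔ, Tmat]
    calc S⁻¹ * (((m : ℂ) + 1) • 1 + c • Dmat m) * S - ((m : ℂ) + 1) • 1
        = ((m : ℂ) + 1) • (S⁻¹ * S) + S⁻¹ * (c • Dmat m) * S - ((m : ℂ) + 1) • 1 := by
          rw [Matrix.mul_add, Matrix.add_mul, Matrix.mul_smul, Matrix.smul_mul,
            Matrix.mul_one]
      _ = _ := by rw [h1]; abel
  have hnil : Δ' ^ (m + 2) = 0 := by
    rw [hΔ', myConjPow S _ h1 h2, smul_pow, Dmat_pow_eq_zero, smul_zero,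
      Matrix.mul_zero, Matrix.zero_mul]
  have hΔ'diag : Δ'.IsDiag := hdiag.sub (Matrix.isDiag_one.smul _)
  have hΔ'0 : Δ' = 0 := by
    rw [← hΔ'diag.diagonal_diag] at hnil ⊢
    rw [Matrix.diagonal_pow] at hnil
    have hz : ∀ i, Δ'.diag i = 0 := by
      intro i
      have hii := congrArg (fun M => M i i) hnil
      simp only [Matrix.diagonal_apply_eq, Matrix.zero_apply, Pi.pow_apply] at hii
      exact pow_eq_zero_iff (by omega) |>.mp hii
    rw [funext hz, Matrix.diagonal_zero]
  have hΔeq : Δ = ((m : ℂ) + 1) • 1 := by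
    have h := hΔ'0
    rw [hΔ'def, sub_eq_zero] at h
    exact h
  have hTeq : Tmat m g = ((m : ℂ) + 1) • 1 := by
    rw [hT, hΔeq, Matrix.mul_smul, Matrix.mul_one, Matrix.smul_mul, h2]
  have h01 : (1 : ℕ) < m + 1 := by omega
  have h00 : (0 : ℕ) < m + 1 := by omega
  have key := congrArg (fun M => M ⟨0, h00⟩ ⟨1, h01⟩) hTeq
  simp only [Tmat, Matrix.add_apply, Matrix.smul_apply, Matrix.one_apply, Dmat,
    Matrix.of_apply] at key
  simp only [smul_zero, zero_add, smul_eq_mul] at key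
  rw [if_neg (show (⟨0, h00⟩ : Fin (m + 1)) ≠ ⟨1, h01⟩ from by simp [Fin.ext_iff]),
    if_pos trivial, mul_zero, zero_add] at key
  rcases mul_eq_zero.mp key with h | h
  · exact hc0 h
  · rw [Complex.ofReal_eq_zero] at h
    refine absurd h (Real.sqrt_ne_zero'.mpr ?_)
    have hm' : (1 : ℝ) ≤ (m : ℝ) := by exact_mod_cast hm
    push_cast
    nlinarith
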